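/- (AGM bound for the triangle query) For any three finite binary relations R, S, T over a domain, the number of triples (x,y,z) with (x,y) ∈ R, (y,z) ∈ S, and (x,z) ∈ T is at most √(|R|·|S|·|T|). In particular, if |R| = |S| = |T| = n, the count is at most n^{3/2}. -/

import Mathlib

open Finset

/-- AGM bound for the triangle query: for finite binary relations `R`, `S`, `T`,
the number of triples `(x,y,z)` with `(x,y) ∈ R`, `(y,z) ∈ S`, `(x,z) ∈ T`
is at most `√(|R|·|S|·|T|)`.  In particular, if all three have size `n`, the
output has at most `n^{3/2}` tuples. -/
theorem agm_triangle_bound {A : Type*} (R S T : Finset (A × A)) :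
    ((Set.ncard {p : A × A × A |
        (p.1, p.2.1) ∈ R ∧ (p.2.1, p.2.2) ∈ S ∧ (p.1, p.2.2) ∈ T} : ℝ)
      ≤ Real.sqrt (R.card * S.card * T.card)) ∧
    ∀ n : ℕ, R.card = n → S.card = n → T.card = n →
      (Set.ncard {p : A × A × A |
          (p.1, p.2.1) ∈ R ∧ (p.2.1, p.2.2) ∈ S ∧ (p.1, p.2.2) ∈ T} : ℝ)
        ≤ (n : ℝ) ^ (3/2 : ℝ) := by
  classical
  set E : Finset (A × A × A) :=
    ((R.image Prod.fst) ×ˢ (R.image Prod.snd) ×ˢ (S.image Prod.snd)).filter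
      (fun p => (p.1, p.2.1) ∈ R ∧ (p.2.1, p.2.2) ∈ S ∧ (p.1, p.2.2) ∈ T) with hE
  have hset : {p : A × A × A |
      (p.1, p.2.1) ∈ R ∧ (p.2.1, p.2.2) ∈ S ∧ (p.1, p.2.2) ∈ T} = ↑E := by
    ext ⟨x, y, z⟩
    simp only [hE, Set.mem_setOf_eq, coe_filter, mem_product, mem_image,
      Set.mem_setOf_eq]
    constructor
    · rintro ⟨h1, h2, h3⟩
      exact ⟨⟨⟨_, h1, rfl⟩, ⟨_, h1, rfl⟩, ⟨_, h2, rfl⟩⟩, h1, h2, h3⟩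
    · rintro ⟨_, h⟩; exact h
  have hncard : Set.ncard {p : A × A × A |
      (p.1, p.2.1) ∈ R ∧ (p.2.1, p.2.2) ∈ S ∧ (p.1, p.2.2) ∈ T} = E.card := by
    rw [hset, Set.ncard_coe_finset]
  -- fiber function
  set f : A × A → Finset (A × A × A) :=
    fun q => E.filter (fun p => (p.1, p.2.1) = q) with hf
  have hmem : ∀ p ∈ E, (p.1, p.2.1) ∈ R := by
    intro p hp
    simp only [hE, mem_filter] at hp
    exact hp.2.1
  have hcard : E.card = ∑ q ∈ R, (f q).card :=
    Finset.card_eq_sum_card_fiberwise hmem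
  -- the doubled set
  set D : Finset ((A × A × A) × (A × A × A)) :=
    (E ×ˢ E).filter (fun pq => pq.1.1 = pq.2.1 ∧ pq.1.2.1 = pq.2.2.1) with hD
  have hDcard : D.card = ∑ q ∈ R, (f q).card ^ 2 := by
    rw [Finset.card_eq_sum_card_fiberwise
      (f := fun pq => (pq.1.1, pq.1.2.1)) (t := R)]
    · refine Finset.sum_congr rfl fun q hq => ?_
      have : D.filter (fun pq => (pq.1.1, pq.1.2.1) = q) = (f q) ×ˢ (f q) := by
        obtain ⟨a, b⟩ := q
        ext ⟨⟨x, y, z⟩, ⟨x', y', z'⟩⟩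
        simp only [hD, hf, mem_filter, mem_product, Prod.mk.injEq]
        constructor
        · rintro ⟨⟨⟨h1, h2⟩, hx, hy⟩, ha, hb⟩
          exact ⟨⟨h1, ha, hb⟩, h2, hx.symm.trans ha, hy.symm.trans hb⟩
        · rintro ⟨⟨h1, ha, hb⟩, h2, ha', hb'⟩
          exact ⟨⟨⟨h1, h2⟩, ha.trans ha'.symm, hb.trans hb'.symm⟩, ha, hb⟩
      rw [this, Finset.card_product, sq]
    · intro pq hpq
      simp only [hD, Finset.mem_coe, mem_filter, mem_product] at hpq
      exact hmem _ hpq.1.1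
  have hDle : D.card ≤ S.card * T.card := by
    rw [← Finset.card_product]
    apply Finset.card_le_card_of_injOn
      (fun pq => ((pq.1.2.1, pq.1.2.2), (pq.2.1, pq.2.2.2)))
    · intro pq hpq
      simp only [hD, Finset.mem_coe, mem_filter, mem_product] at hpq
      obtain ⟨⟨hp1, hp2⟩, -, -⟩ := hpq
      simp only [hE, mem_filter] at hp1 hp2
      exact Finset.mem_product.2 ⟨hp1.2.2.1, hp2.2.2.2⟩
    · rintro ⟨⟨x, y, z⟩, ⟨x', y', z'⟩⟩ h1 ⟨⟨a, b, c⟩, ⟨a', b', c'⟩⟩ h2 heq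
      simp only [hD, Finset.mem_coe, mem_filter, mem_product] at h1 h2
      simp only [Prod.mk.injEq] at heq
      obtain ⟨⟨hy, hz⟩, hx', hz'⟩ := heq
      obtain ⟨-, hx1, hy1⟩ := h1
      obtain ⟨-, hx2, hy2⟩ := h2
      -- x = x', y = y' etc
      simp only [Prod.mk.injEq]
      refine ⟨⟨?_, hy, hz⟩, hx', ?_, hz'⟩
      · rw [hx1, hx', ← hx2]
      · rw [← hy1, hy, hy2]
  -- Cauchy–Schwarz over ℝ
  have key : (E.card : ℝ) ^ 2 ≤ (R.card : ℝ) * (S.card : ℝ) * (T.card : ℝ) := by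
    have cs : (∑ q ∈ R, ((f q).card : ℝ)) ^ 2
        ≤ (R.card : ℝ) * ∑ q ∈ R, ((f q).card : ℝ) ^ 2 :=
      sq_sum_le_card_mul_sum_sq
    have h1 : (E.card : ℝ) = ∑ q ∈ R, ((f q).card : ℝ) := by
      rw [hcard]; push_cast; ring
    have h2 : (∑ q ∈ R, ((f q).card : ℝ) ^ 2) = (D.card : ℝ) := by
      rw [hDcard]; push_cast; ring
    calc (E.card : ℝ) ^ 2 ≤ (R.card : ℝ) * ∑ q ∈ R, ((f q).card : ℝ) ^ 2 := by
          rw [h1]; exact cs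
      _ = (R.card : ℝ) * (D.card : ℝ) := by rw [h2]
      _ ≤ (R.card : ℝ) * ((S.card : ℝ) * (T.card : ℝ)) := by
          have : (D.card : ℝ) ≤ (S.card : ℝ) * (T.card : ℝ) := by
            exact_mod_cast hDle
          exact mul_le_mul_of_nonneg_left this (by positivity)
      _ = _ := by ring
  have main : ((Set.ncard {p : A × A × A |
      (p.1, p.2.1) ∈ R ∧ (p.2.1, p.2.2) ∈ S ∧ (p.1, p.2.2) ∈ T} : ℕ) : ℝ)
      ≤ Real.sqrt (R.card * S.card * T.card) := by
    rw [hncard]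
    have : (E.card : ℝ) = Real.sqrt ((E.card : ℝ) ^ 2) := by
      rw [Real.sqrt_sq (by positivity)]
    rw [this]
    exact Real.sqrt_le_sqrt key
  refine ⟨main, fun n hR hS hT => ?_⟩
  refine main.trans (le_of_eq ?_)
  rw [hR, hS, hT]
  rw [show ((n : ℝ) * n * n) = (n : ℝ) ^ (3 : ℕ) by ring, Real.sqrt_eq_rpow,
    ← Real.rpow_natCast (n : ℝ) 3, ← Real.rpow_mul (by positivity)]
  norm_num
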